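/- Let G be a connected finite simple graph on n vertices with nonnegative edge weights w, and let k be an integer with 2 ≤ k ≤ n. Then there exists a set S of exactly k vertices of G such that G[S] is connected and σ_w(G[S]) ≥ (2/k)·σ*_{k,w}(G), where σ*_{k,w}(G) is the maximum weighted density over all k-vertex subgraphs of G (not necessarily connected). -/

import Mathlib

open Finset

variable {V : Type*}

noncomputable def graphDensity [Fintype V] (G : SimpleGraph V) : ℝ :=
  2 * G.edgeSet.ncard / Fintype.card V

noncomputable def setDensity (G : SimpleGraph V) (A : Set V) : ℝ :=
  2 * (G.induce A).edgeSet.ncard / A.ncard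

noncomputable def indDensity (G : SimpleGraph V) (S : Finset V) : ℝ :=
  2 * (G.induce (S : Set V)).edgeSet.ncard / S.card

noncomputable def subDensity {G : SimpleGraph V} (H : G.Subgraph) : ℝ :=
  2 * H.edgeSet.ncard / H.verts.ncard

noncomputable def maxKDensity (G : SimpleGraph V) (k : ℕ) : ℝ :=
  sSup {x : ℝ | ∃ H : G.Subgraph, H.verts.ncard = k ∧ x = subDensity H}

noncomputable def maxConnKDensity (G : SimpleGraph V) (k : ℕ) : ℝ :=
  sSup {x : ℝ | ∃ H : G.Subgraph, H.verts.ncard = k ∧ H.Connected ∧ x = subDensity H}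

noncomputable def maxDensity (G : SimpleGraph V) : ℝ :=
  sSup {x : ℝ | ∃ H : G.Subgraph, H.verts.Nonempty ∧ x = subDensity H}

def cutCount (G : SimpleGraph V) [DecidableRel G.Adj] (S T : Finset V) : ℕ :=
  ((S ×ˢ T).filter fun p => G.Adj p.1 p.2).card

def IsCompOf (G : SimpleGraph V) (A W : Set V) : Prop :=
  A.Nonempty ∧ A ⊆ W ∧ (G.induce A).Connected ∧
    ∀ B : Set V, A ⊆ B → B ⊆ W → (G.induce B).Connected → B = A

noncomputable def subWDensity {G : SimpleGraph V} (w : Sym2 V → ℝ) (H : G.Subgraph) : ℝ :=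
  2 * (∑ᶠ e ∈ H.edgeSet, w e) / H.verts.ncard

noncomputable def indWDensity (G : SimpleGraph V) (w : Sym2 V → ℝ) (S : Finset V) : ℝ :=
  2 * (∑ᶠ e ∈ {e : Sym2 V | e ∈ G.edgeSet ∧ ∀ v ∈ e, v ∈ S}, w e) / S.card

noncomputable def maxKWDensity (G : SimpleGraph V) (w : Sym2 V → ℝ) (k : ℕ) : ℝ :=
  sSup {x : ℝ | ∃ H : G.Subgraph, H.verts.ncard = k ∧ x = subWDensity w H}

noncomputable def maxConnKWDensity (G : SimpleGraph V) (w : Sym2 V → ℝ) (k : ℕ) : ℝ :=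
  sSup {x : ℝ | ∃ H : G.Subgraph, H.verts.ncard = k ∧ H.Connected ∧ x = subWDensity w H}


section StmtAux
set_option linter.unusedSectionVars false
variable [Fintype V] [DecidableEq V] (G : SimpleGraph V) (w : Sym2 V → ℝ)

/-- edges of `G` inside the finset `S`. -/
def ESet (S : Finset V) : Set (Sym2 V) := {e : Sym2 V | e ∈ G.edgeSet ∧ ∀ v ∈ e, v ∈ S}

noncomputable def wsum (S : Finset V) : ℝ := ∑ᶠ e ∈ ESet G S, w e

lemma wsum_eq (S : Finset V) :
    wsum G w S = ∑ e ∈ (Set.toFinite (ESet G S)).toFinset, w e :=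
  finsum_mem_eq_finite_toFinset_sum _ _

lemma le_wsum_of_subset (hw : ∀ e, 0 ≤ w e) {s : Set (Sym2 V)} {S : Finset V}
    (hs : s ⊆ ESet G S) : (∑ᶠ e ∈ s, w e) ≤ wsum G w S := by
  rw [wsum_eq, finsum_mem_eq_finite_toFinset_sum _ (Set.toFinite s)]
  refine Finset.sum_le_sum_of_subset_of_nonneg ?_ (fun e _ _ => hw e)
  intro e he
  simp only [Set.Finite.mem_toFinset] at he ⊢
  exact hs he

lemma wsum_nonneg (hw : ∀ e, 0 ≤ w e) (S : Finset V) : 0 ≤ wsum G w S := by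
  rw [wsum_eq]; exact Finset.sum_nonneg fun e _ => hw e

lemma wsum_mono (hw : ∀ e, 0 ≤ w e) {S T : Finset V} (h : S ⊆ T) :
    wsum G w S ≤ wsum G w T := by
  rw [wsum_eq G w S, ← finsum_mem_eq_finite_toFinset_sum]
  exact le_wsum_of_subset G w hw fun e he => ⟨he.1, fun v hv => h (he.2 v hv)⟩

lemma handshake (S : Finset V) [DecidableRel G.Adj] :
    ∑ v ∈ S, ∑ u ∈ S.filter (fun u => G.Adj v u), w s(v, u) = 2 * wsum G w S := by
  have h1 : ∑ v ∈ S, ∑ u ∈ S.filter (fun u => G.Adj v u), w s(v, u)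
      = ∑ p ∈ (S ×ˢ S).filter (fun p => G.Adj p.1 p.2), w s(p.1, p.2) := by
    rw [Finset.sum_filter, Finset.sum_product]
    simp [Finset.sum_filter]
  set P := (S ×ˢ S).filter (fun p => G.Adj p.1 p.2) with hP
  have h2 : P.image (fun p : V × V => s(p.1, p.2)) = (Set.toFinite (ESet G S)).toFinset := by
    ext e
    induction e with
    | _ x y =>
      simp only [Finset.mem_image, Set.Finite.mem_toFinset, ESet, Set.mem_setOf_eq, hP,
        Finset.mem_filter, Finset.mem_product]
      constructor
      · rintro ⟨⟨a, b⟩, ⟨⟨ha, hb⟩, hadj⟩, heq⟩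
        rw [Sym2.eq_iff] at heq
        constructor
        · rcases heq with ⟨rfl, rfl⟩ | ⟨rfl, rfl⟩
          · exact hadj
          · exact hadj.symm
        · intro v hv
          rw [Sym2.mem_iff] at hv
          rcases heq with ⟨rfl, rfl⟩ | ⟨rfl, rfl⟩ <;> rcases hv with rfl | rfl <;> assumption
      · rintro ⟨hadj, hmem⟩
        exact ⟨(x, y), ⟨⟨hmem x (by simp), hmem y (by simp)⟩, hadj⟩, rfl⟩
  have h3 : ∀ e ∈ P.image (fun p : V × V => s(p.1, p.2)),
      (P.filter (fun p => s(p.1, p.2) = e)).card = 2 := by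
    rintro e he
    rw [Finset.mem_image] at he
    obtain ⟨⟨x, y⟩, hxy, rfl⟩ := he
    rw [hP, Finset.mem_filter, Finset.mem_product] at hxy
    obtain ⟨⟨hx, hy⟩, hadj⟩ := hxy
    have hne : x ≠ y := hadj.ne
    have : P.filter (fun p => s(p.1, p.2) = s(x, y)) = {(x, y), (y, x)} := by
      ext ⟨a, b⟩
      simp only [Finset.mem_filter, hP, Finset.mem_product, Finset.mem_insert,
        Finset.mem_singleton, Prod.mk.injEq, Sym2.eq_iff]
      constructor
      · rintro ⟨_, ⟨rfl, rfl⟩ | ⟨rfl, rfl⟩⟩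
        · exact Or.inl ⟨rfl, rfl⟩
        · exact Or.inr ⟨rfl, rfl⟩
      · rintro (⟨rfl, rfl⟩ | ⟨rfl, rfl⟩)
        · exact ⟨⟨⟨hx, hy⟩, hadj⟩, Or.inl ⟨rfl, rfl⟩⟩
        · exact ⟨⟨⟨hy, hx⟩, hadj.symm⟩, Or.inr ⟨rfl, rfl⟩⟩
    rw [this, Finset.card_insert_of_notMem (by simp [hne, Prod.ext_iff]), Finset.card_singleton]
  rw [h1, Finset.sum_comp (f := w) (g := fun p : V × V => s(p.1, p.2))]
  rw [Finset.sum_congr rfl fun e he => by rw [h3 e he]]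
  rw [h2, wsum_eq]
  rw [← Finset.smul_sum, nsmul_eq_mul]
  norm_num

lemma star_le_wsum (hw : ∀ e, 0 ≤ w e) (v : V) (N : Finset V) (hN : ∀ u ∈ N, G.Adj v u) :
    ∑ u ∈ N, w s(v, u) ≤ wsum G w (insert v N) := by
  have himg : ∑ e ∈ N.image (fun u => s(v, u)), w e = ∑ u ∈ N, w s(v, u) :=
    Finset.sum_image (fun a ha b hb hab => by
      rw [Sym2.eq_iff] at hab
      rcases hab with ⟨-, h⟩ | ⟨h1, h2⟩
      · exact h
      · exact absurd (h1 ▸ hN b hb) (G.irrefl))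
  rw [wsum_eq, ← himg]
  refine Finset.sum_le_sum_of_subset_of_nonneg ?_ (fun e _ _ => hw e)
  intro e he
  rw [Finset.mem_image] at he
  obtain ⟨u, hu, rfl⟩ := he
  simp only [Set.Finite.mem_toFinset, ESet, Set.mem_setOf_eq]
  refine ⟨hN u hu, ?_⟩
  intro x hx
  rw [Sym2.mem_iff] at hx
  rcases hx with rfl | rfl
  · exact Finset.mem_insert_self _ _
  · exact Finset.mem_insert_of_mem hu

lemma star_connected {v : V} {s : Set V} (hv : v ∈ s) (h : ∀ u ∈ s, u = v ∨ G.Adj v u) :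
    (G.induce s).Connected := by
  rw [SimpleGraph.connected_iff]
  have key : ∀ a : s, (G.induce s).Reachable a ⟨v, hv⟩ := by
    rintro ⟨a, ha⟩
    rcases h a ha with rfl | hadj
    · exact SimpleGraph.Reachable.refl _
    · exact SimpleGraph.Adj.reachable (by exact hadj.symm)
  exact ⟨fun a b => (key a).trans (key b).symm, ⟨⟨v, hv⟩⟩⟩

lemma extend_conn (hG : G.Connected) :
    ∀ (m : ℕ) (S : Finset V), S.Nonempty → (G.induce (S : Set V)).Connected →
      S.card + m ≤ Fintype.card V →
      ∃ T : Finset V, S ⊆ T ∧ T.card = S.card + m ∧ (G.induce (T : Set V)).Connected := by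
  intro m
  induction m with
  | zero => exact fun S hne hconn _ => ⟨S, subset_rfl, by simp, hconn⟩
  | succ m ih =>
    intro S hne hconn hcard
    obtain ⟨u, hu⟩ : ∃ u, u ∉ S := by
      by_contra hcon; push_neg at hcon
      have := Finset.card_le_card (fun x _ => hcon x : (univ : Finset V) ⊆ S)
      simp only [Finset.card_univ] at this
      omega
    obtain ⟨s0, hs0⟩ := hne
    obtain ⟨p⟩ := hG.preconnected s0 u
    obtain ⟨d, -, hdS, hdnS⟩ := p.exists_boundary_dart (S : Set V) (by simpa) (by simpa)
    have hadj : G.Adj d.fst d.snd := d.adj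
    have haS : d.snd ∉ S := by simpa using hdnS
    have hdSS : d.fst ∈ S := by simpa using hdS
    have hins : ((insert d.snd S : Finset V) : Set V) = (S : Set V) ∪ {d.fst, d.snd} := by
      ext x
      simp only [Finset.coe_insert, Set.mem_insert_iff, Finset.mem_coe, Set.mem_union,
        Set.mem_insert_iff, Set.mem_singleton_iff]
      constructor
      · rintro (rfl | hx)
        · exact Or.inr (Or.inr rfl)
        · exact Or.inl hx
      · rintro (hx | rfl | rfl)
        · exact Or.inr hx
        · exact Or.inr hdSS
        · exact Or.inl rfl
    have hconn' : (G.induce ((insert d.snd S : Finset V) : Set V)).Connected := by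
      rw [hins]
      exact SimpleGraph.induce_union_connected hconn.preconnected
        (SimpleGraph.induce_pair_connected_of_adj hadj).preconnected ⟨d.fst, hdS, by simp⟩
    obtain ⟨T, hST, hcardT, hTconn⟩ := ih (insert d.snd S) ⟨d.snd, Finset.mem_insert_self _ _⟩
      hconn' (by rw [Finset.card_insert_of_notMem haS]; omega)
    refine ⟨T, (Finset.subset_insert _ _).trans hST, ?_, hTconn⟩
    rw [hcardT, Finset.card_insert_of_notMem haS]
    omega

end StmtAux

/-- greedy gives a connected `k`-subgraph of weighted density at least
`(2/k)·σ*_{k,w}(G)`. -/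
theorem stmt16 [Fintype V] [DecidableEq V] (G : SimpleGraph V)
    (hG : G.Connected) (w : Sym2 V → ℝ) (hw : ∀ e, 0 ≤ w e)
    (k : ℕ) (hk2 : 2 ≤ k) (hkn : k ≤ Fintype.card V) :
    ∃ S : Finset V, S.card = k ∧ (G.induce (S : Set V)).Connected ∧
      indWDensity G w S ≥ (2 / (k : ℝ)) * maxKWDensity G w k := by
  classical
  have hkR : (0:ℝ) < k := by exact_mod_cast (by omega : 0 < k)
  have hkne : (k:ℝ) ≠ 0 := ne_of_gt hkR
  obtain ⟨S0, -, hS0⟩ := Finset.exists_subset_card_eq (s := (univ : Finset V)) (n := k) (by simpa using hkn)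
  set 𝒦 := (univ : Finset (Finset V)).filter (fun S => S.card = k) with h𝒦def
  have h𝒦 : 𝒦.Nonempty := ⟨S0, by simp [h𝒦def, hS0]⟩
  obtain ⟨Sm, hSm𝒦, hSmax⟩ := Finset.exists_max_image 𝒦 (wsum G w) h𝒦
  have hSmk : Sm.card = k := (Finset.mem_filter.1 hSm𝒦).2
  -- bound the sup
  have hMle : maxKWDensity G w k ≤ 2 * wsum G w Sm / k := by
    apply Real.sSup_le
    · rintro x ⟨H, hHk, rfl⟩
      unfold subWDensity
      rw [hHk]
      have hfin : H.verts.Finite := Set.toFinite _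
      have hFk : hfin.toFinset.card = k := by rw [← hHk, Set.ncard_eq_toFinset_card _ hfin]
      have h1 : (∑ᶠ e ∈ H.edgeSet, w e) ≤ wsum G w hfin.toFinset := by
        apply le_wsum_of_subset G w hw
        intro e he
        induction e with
        | _ x y =>
          rw [SimpleGraph.Subgraph.mem_edgeSet] at he
          refine ⟨he.adj_sub, ?_⟩
          intro z hz
          rw [Sym2.mem_iff] at hz
          rcases hz with rfl | rfl
          · exact hfin.mem_toFinset.2 (H.edge_vert he)
          · exact hfin.mem_toFinset.2 (H.edge_vert he.symm)
      have h2 : wsum G w hfin.toFinset ≤ wsum G w Sm :=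
        hSmax _ (Finset.mem_filter.2 ⟨Finset.mem_univ _, hFk⟩)
      gcongr
      linarith
    · have := wsum_nonneg G w hw Sm
      positivity
  -- a vertex of large weighted degree in the optimal set
  have hSmne : Sm.Nonempty := Finset.card_pos.1 (by omega)
  obtain ⟨v, hv, hvrow⟩ : ∃ v ∈ Sm,
      2 * wsum G w Sm / k ≤ ∑ u ∈ Sm.filter (fun u => G.Adj v u), w s(v, u) := by
    refine Finset.exists_le_of_sum_le hSmne ?_
    rw [handshake G w Sm, Finset.sum_const, hSmk, nsmul_eq_mul,
      mul_div_cancel₀ _ hkne]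
  set N := Sm.filter (fun u => G.Adj v u) with hNdef
  set S1 := insert v N with hS1def
  have hS1sub : S1 ⊆ Sm := Finset.insert_subset hv (Finset.filter_subset _ _)
  have hS1card : S1.card ≤ k := hSmk ▸ Finset.card_le_card hS1sub
  have hS1conn : (G.induce (S1 : Set V)).Connected := by
    refine star_connected G (v := v) (s := (S1 : Set V)) (by simp [hS1def]) ?_
    intro u hu
    rw [Finset.mem_coe, hS1def, Finset.mem_insert] at hu
    rcases hu with rfl | hu
    · exact Or.inl rfl
    · exact Or.inr (Finset.mem_filter.1 hu).2
  have hS1w : 2 * wsum G w Sm / k ≤ wsum G w S1 :=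
    hvrow.trans (star_le_wsum G w hw v N fun u hu => (Finset.mem_filter.1 hu).2)
  obtain ⟨T, hTsub, hTcard, hTconn⟩ := extend_conn G hG (k - S1.card) S1
    ⟨v, Finset.mem_insert_self _ _⟩ hS1conn (by omega)
  have hTk : T.card = k := by omega
  refine ⟨T, hTk, hTconn, ?_⟩
  have hwT : 2 * wsum G w Sm / k ≤ wsum G w T := hS1w.trans (wsum_mono G w hw hTsub)
  have hind : indWDensity G w T = 2 * wsum G w T / k := by
    unfold indWDensity wsum ESet
    rw [hTk]
  rw [ge_iff_le, hind]
  calc (2 / (k:ℝ)) * maxKWDensity G w k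
      ≤ (2 / (k:ℝ)) * (2 * wsum G w Sm / k) :=
        mul_le_mul_of_nonneg_left hMle (by positivity)
    _ ≤ (2 / (k:ℝ)) * wsum G w T := mul_le_mul_of_nonneg_left hwT (by positivity)
    _ = 2 * wsum G w T / k := by ring
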